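/- Let y be an m-dimensional probability vector and y' an n-dimensional probability vector, both with components in nonincreasing order, and assume y₁ > y_m and y'₁ > y'ₙ (neither is a uniform vector). Let x ∈ S°(y) and x' ∈ S°(y'). Then x ⊕ x' is an interior point of S(y ⊕ y') if and only if y₁ > y'ₙ and y'₁ > y_m. More compactly, S°(y) ⊕ S°(y') ⊆ S°(y ⊕ y') if and only if y₁ > y'ₙ and y'₁ > y_m. -/

import Mathlib

open Finset

variable {ι κ : Type*}

/-- `eSum x l` is the sum of the `l` largest components of `x`. -/
noncomputable def eSum [Fintype ι] (x : ι → ℝ) (l : ℕ) : ℝ :=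
  sSup {r : ℝ | ∃ s : Finset ι, s.card = l ∧ r = ∑ i ∈ s, x i}

/-- Majorization `x ≺ y` for vectors over the same (finite) index type:
`e_l(x) ≤ e_l(y)` for all `1 ≤ l ≤ n - 1`, with equal total sums. -/
def Maj [Fintype ι] (x y : ι → ℝ) : Prop :=
  (∀ l : ℕ, 1 ≤ l → l < Fintype.card ι → eSum x l ≤ eSum y l) ∧
    ∑ i, x i = ∑ i, y i

/-- A probability vector: nonnegative components summing to 1. -/
def IsProbVec [Fintype ι] (x : ι → ℝ) : Prop :=
  (∀ i, 0 ≤ x i) ∧ ∑ i, x i = 1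

/-- Kronecker product of two vectors. -/
def kron (x : ι → ℝ) (c : κ → ℝ) : ι × κ → ℝ := fun p => x p.1 * c p.2

/-- `k`-fold Kronecker power of a vector. -/
def kpow (x : ι → ℝ) (k : ℕ) : (Fin k → ι) → ℝ := fun f => ∏ j, x (f j)

/-- Direct sum (concatenation) of two vectors. -/
def dsum (x : ι → ℝ) (c : κ → ℝ) : ι ⊕ κ → ℝ := Sum.elim x c

/-- `k`-fold direct sum (concatenation) of `x` with itself. -/
def dpow (x : ι → ℝ) (k : ℕ) : Fin k × ι → ℝ := fun p => x p.2

/-- `x ∈ S°(y)`: all partial-sum inequalities `e_l(x) < e_l(y)` are strict for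
`1 ≤ l ≤ n - 1`, and the total sums coincide. -/
def InteriorS [Fintype ι] (x y : ι → ℝ) : Prop :=
  (∀ l : ℕ, 1 ≤ l → l < Fintype.card ι → eSum x l < eSum y l) ∧
    ∑ i, x i = ∑ i, y i

/-- `d_x`: the number of nonzero components of `x`. -/
noncomputable def dsupp (x : ι → ℝ) : ℕ := Nat.card (Function.support x)

/-- The `α`-Renyi entropy `S^{(α)}(x)`; at `α = 1` it is the Shannon entropy. -/
noncomputable def renyi [Fintype ι] (x : ι → ℝ) (α : ℝ) : ℝ :=
  if α = 1 then -∑ i, x i * Real.logb 2 (x i)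
  else (if 0 ≤ α then (1 : ℝ) else -1) / (1 - α) *
    Real.logb 2 (∑ i, if x i = 0 then 0 else x i ^ α)

/-- The Renyi entropy of `x` is not less than that of `y`. -/
def RenyiGE [Fintype ι] [Fintype κ] (x : ι → ℝ) (y : κ → ℝ) : Prop :=
  (dsupp x > dsupp y ∧ ∀ α : ℝ, 0 ≤ α → renyi y α ≤ renyi x α) ∨
  (dsupp x = dsupp y ∧ ∀ α : ℝ, renyi y α ≤ renyi x α)

section Aux
variable {ι κ : Type*}

lemma eSum_set_eq [Fintype ι] (x : ι → ℝ) (l : ℕ) :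
    {r : ℝ | ∃ s : Finset ι, s.card = l ∧ r = ∑ i ∈ s, x i}
      = ↑((Finset.univ.powersetCard l).image (fun s => ∑ i ∈ s, x i)) := by
  ext r
  simp only [Finset.coe_image, Set.mem_image, Finset.mem_coe,
    Finset.mem_powersetCard_univ, Set.mem_setOf_eq]
  constructor
  · rintro ⟨s, h1, h2⟩; exact ⟨s, h1, h2.symm⟩
  · rintro ⟨s, h1, h2⟩; exact ⟨s, h1, h2.symm⟩

lemma le_eSum [Fintype ι] (x : ι → ℝ) {l : ℕ} {s : Finset ι} (hs : s.card = l) :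
    ∑ i ∈ s, x i ≤ eSum x l := by
  rw [eSum]
  apply le_csSup
  · rw [eSum_set_eq]
    exact Finset.bddAbove _
  · exact ⟨s, hs, rfl⟩

lemma eSum_mem [Fintype ι] (x : ι → ℝ) {l : ℕ} (hl : l ≤ Fintype.card ι) :
    ∃ s : Finset ι, s.card = l ∧ eSum x l = ∑ i ∈ s, x i := by
  have hfin : ({r : ℝ | ∃ s : Finset ι, s.card = l ∧ r = ∑ i ∈ s, x i}).Finite := by
    rw [eSum_set_eq]; exact Finset.finite_toSet _
  have hne : ({r : ℝ | ∃ s : Finset ι, s.card = l ∧ r = ∑ i ∈ s, x i}).Nonempty := by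
    obtain ⟨s, -, hs⟩ := Finset.exists_subset_card_eq (s := Finset.univ) (n := l) (by simpa using hl)
    exact ⟨∑ i ∈ s, x i, s, hs, rfl⟩
  obtain ⟨s, h1, h2⟩ := hne.csSup_mem hfin
  exact ⟨s, h1, h2⟩

lemma eSum_le [Fintype ι] (x : ι → ℝ) {l : ℕ} {c : ℝ} (hl : l ≤ Fintype.card ι)
    (hc : ∀ s : Finset ι, s.card = l → ∑ i ∈ s, x i ≤ c) :
    eSum x l ≤ c := by
  obtain ⟨s, h1, h2⟩ := eSum_mem x hl
  rw [h2]; exact hc s h1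

lemma eSum_zero [Fintype ι] (x : ι → ℝ) : eSum x 0 = 0 := by
  have hset : {r : ℝ | ∃ s : Finset ι, s.card = 0 ∧ r = ∑ i ∈ s, x i} = {0} := by
    ext r; simp [Finset.card_eq_zero]
  rw [eSum, hset, csSup_singleton]

lemma eSum_card [Fintype ι] (x : ι → ℝ) : eSum x (Fintype.card ι) = ∑ i, x i := by
  have hset : {r : ℝ | ∃ s : Finset ι, s.card = Fintype.card ι ∧ r = ∑ i ∈ s, x i}
      = {∑ i, x i} := by
    ext r
    simp only [Set.mem_setOf_eq, Set.mem_singleton_iff]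
    constructor
    · rintro ⟨s, h1, rfl⟩
      rw [(Finset.card_eq_iff_eq_univ s).mp h1]
    · rintro rfl
      exact ⟨Finset.univ, by simp, rfl⟩
  rw [eSum, hset, csSup_singleton]

lemma interiorS_eSum_le [Fintype ι] {x y : ι → ℝ} (h : InteriorS x y) {b : ℕ}
    (hb : b ≤ Fintype.card ι) : eSum x b ≤ eSum y b := by
  rcases Nat.eq_zero_or_pos b with hb0 | hb1
  · subst hb0; rw [eSum_zero, eSum_zero]
  rcases eq_or_lt_of_le hb with hbc | hbc
  · subst hbc; rw [eSum_card, eSum_card]; exact le_of_eq h.2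
  · exact (h.1 b hb1 hbc).le

lemma eSum_dsum_ge {m n : ℕ} (y : Fin m → ℝ) (y' : Fin n → ℝ) {a b : ℕ}
    (ha : a ≤ m) (hb : b ≤ n) :
    eSum y a + eSum y' b ≤ eSum (dsum y y') (a + b) := by
  obtain ⟨sa, hca, hea⟩ := eSum_mem y (by simpa using ha)
  obtain ⟨sb, hcb, heb⟩ := eSum_mem y' (by simpa using hb)
  rw [hea, heb]
  have := le_eSum (dsum y y') (s := sa.disjSum sb)
    (by rw [Finset.card_disjSum, hca, hcb])
  simpa [Finset.sum_disjSum, dsum] using this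

lemma sum_dsum_decomp {m n : ℕ} (y : Fin m → ℝ) (y' : Fin n → ℝ)
    (s : Finset (Fin m ⊕ Fin n)) :
    ∑ i ∈ s, dsum y y' i = ∑ i ∈ s.toLeft, y i + ∑ i ∈ s.toRight, y' i := by
  conv_lhs => rw [← Finset.toLeft_disjSum_toRight (u := s)]
  rw [Finset.sum_disjSum]
  rfl

end Aux

/-- Let `y` (dimension `m`) and `y'` (dimension `n`) be nonincreasingly ordered,
non-uniform probability vectors, `x ∈ S°(y)`, `x' ∈ S°(y')`. Then
`x ⊕ x' ∈ S°(y ⊕ y')` iff `y₁ > y'ₙ` and `y'₁ > y_m`. -/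
theorem stmt9 {m n : ℕ} (hm : 0 < m) (hn : 0 < n)
    (y : Fin m → ℝ) (y' : Fin n → ℝ) (x : Fin m → ℝ) (x' : Fin n → ℝ)
    (hy : IsProbVec y) (hy' : IsProbVec y')
    (hya : Antitone y) (hy'a : Antitone y')
    (hnu : y ⟨0, hm⟩ > y ⟨m - 1, by omega⟩) (hnu' : y' ⟨0, hn⟩ > y' ⟨n - 1, by omega⟩)
    (h : InteriorS x y) (h' : InteriorS x' y') :
    InteriorS (dsum x x') (dsum y y') ↔
      (y ⟨0, hm⟩ > y' ⟨n - 1, by omega⟩ ∧ y' ⟨0, hn⟩ > y ⟨m - 1, by omega⟩) := by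
  have hcard : Fintype.card (Fin m ⊕ Fin n) = m + n := by simp
  have hsx : ∑ i, x i = 1 := h.2.trans hy.2
  have hsx' : ∑ i, x' i = 1 := h'.2.trans hy'.2
  have hsumXY : ∑ i, dsum x x' i = ∑ i, dsum y y' i := by
    rw [Fintype.sum_sum_type, Fintype.sum_sum_type]
    show ∑ i, x i + ∑ i, x' i = ∑ i, y i + ∑ i, y' i
    rw [h.2, h'.2]
  -- lower bounds on eSum of concatenated targets, used in both directions
  have key_m : y' ⟨0, hn⟩ > y ⟨m - 1, by omega⟩ → 1 < eSum (dsum y y') m := by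
    intro hB
    have hcl : ((Finset.univ.erase (⟨m - 1, by omega⟩ : Fin m)).disjSum
        ({(⟨0, hn⟩ : Fin n)} : Finset (Fin n))).card = m := by
      rw [Finset.card_disjSum, Finset.card_erase_of_mem (Finset.mem_univ _),
        Finset.card_univ, Fintype.card_fin, Finset.card_singleton]
      omega
    have hle := le_eSum (dsum y y') hcl
    rw [Finset.sum_disjSum] at hle
    have he : ∑ i ∈ Finset.univ.erase (⟨m - 1, by omega⟩ : Fin m), y i
        = 1 - y ⟨m - 1, by omega⟩ := by
      have := Finset.sum_erase_add Finset.univ y (Finset.mem_univ (⟨m - 1, by omega⟩ : Fin m))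
      rw [hy.2] at this; linarith
    have hsing : ∑ i ∈ ({(⟨0, hn⟩ : Fin n)} : Finset (Fin n)),
        dsum y y' (Sum.inr i) = y' ⟨0, hn⟩ := by
      rw [Finset.sum_singleton]; rfl
    have he2 : ∑ i ∈ Finset.univ.erase (⟨m - 1, by omega⟩ : Fin m),
        dsum y y' (Sum.inl i) = 1 - y ⟨m - 1, by omega⟩ := he
    rw [he2, hsing] at hle
    linarith
  have key_n : y ⟨0, hm⟩ > y' ⟨n - 1, by omega⟩ → 1 < eSum (dsum y y') n := by
    intro hA
    have hcl : ((({(⟨0, hm⟩ : Fin m)} : Finset (Fin m))).disjSum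
        (Finset.univ.erase (⟨n - 1, by omega⟩ : Fin n))).card = n := by
      rw [Finset.card_disjSum, Finset.card_erase_of_mem (Finset.mem_univ _),
        Finset.card_univ, Fintype.card_fin, Finset.card_singleton]
      omega
    have hle := le_eSum (dsum y y') hcl
    rw [Finset.sum_disjSum] at hle
    have he : ∑ i ∈ Finset.univ.erase (⟨n - 1, by omega⟩ : Fin n), y' i
        = 1 - y' ⟨n - 1, by omega⟩ := by
      have := Finset.sum_erase_add Finset.univ y' (Finset.mem_univ (⟨n - 1, by omega⟩ : Fin n))
      rw [hy'.2] at this; linarith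
    have he2 : ∑ i ∈ Finset.univ.erase (⟨n - 1, by omega⟩ : Fin n),
        dsum y y' (Sum.inr i) = 1 - y' ⟨n - 1, by omega⟩ := he
    have hsing : ∑ i ∈ ({(⟨0, hm⟩ : Fin m)} : Finset (Fin m)),
        dsum y y' (Sum.inl i) = y ⟨0, hm⟩ := by
      rw [Finset.sum_singleton]; rfl
    rw [he2, hsing] at hle
    linarith
  constructor
  · intro hI
    constructor
    · -- y ⟨0⟩ > y' ⟨n-1⟩
      by_contra hc
      push_neg at hc
      -- eSum (dsum y y') n ≤ 1
      have hub : eSum (dsum y y') n ≤ 1 := by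
        apply eSum_le _ (by rw [hcard]; omega)
        intro s hs
        rw [sum_dsum_decomp]
        have hab : s.toLeft.card + s.toRight.card = n := by
          rw [Finset.card_toLeft_add_card_toRight, hs]
        have h1 : ∑ i ∈ s.toLeft, y i ≤ s.toLeft.card • y' ⟨n - 1, by omega⟩ := by
          apply Finset.sum_le_card_nsmul
          intro i _
          calc y i ≤ y ⟨0, hm⟩ := hya (by simp [Fin.le_def])
            _ ≤ y' ⟨n - 1, by omega⟩ := hc
        have h2 : (s.toRightᶜ.card : ℕ) • y' ⟨n - 1, by omega⟩ ≤ ∑ i ∈ s.toRightᶜ, y' i := by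
          apply Finset.card_nsmul_le_sum
          intro i _
          exact hy'a (by simp [Fin.le_def]; omega)
        have hcc : s.toRightᶜ.card = s.toLeft.card := by
          rw [Finset.card_compl, Fintype.card_fin]; omega
        rw [hcc] at h2
        have h3 : ∑ i ∈ s.toRight, y' i + ∑ i ∈ s.toRightᶜ, y' i = 1 := by
          rw [Finset.sum_add_sum_compl, hy'.2]
        linarith
      have hlb : (1 : ℝ) ≤ eSum (dsum x x') n := by
        have hcl : ((∅ : Finset (Fin m)).disjSum (Finset.univ : Finset (Fin n))).card = n := by
          simp
        have hle := le_eSum (dsum x x') hcl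
        rw [Finset.sum_disjSum, Finset.sum_empty] at hle
        have : ∑ i, dsum x x' (Sum.inr i) = (1 : ℝ) := by
          rw [show (fun i => dsum x x' (Sum.inr i)) = x' from rfl, hsx']
        rw [this] at hle
        linarith
      have := hI.1 n hn (by rw [hcard]; omega)
      linarith
    · -- y' ⟨0⟩ > y ⟨m-1⟩
      by_contra hc
      push_neg at hc
      have hub : eSum (dsum y y') m ≤ 1 := by
        apply eSum_le _ (by rw [hcard]; omega)
        intro s hs
        rw [sum_dsum_decomp]
        have hab : s.toLeft.card + s.toRight.card = m := by
          rw [Finset.card_toLeft_add_card_toRight, hs]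
        have h1 : ∑ i ∈ s.toRight, y' i ≤ s.toRight.card • y ⟨m - 1, by omega⟩ := by
          apply Finset.sum_le_card_nsmul
          intro i _
          calc y' i ≤ y' ⟨0, hn⟩ := hy'a (by simp [Fin.le_def])
            _ ≤ y ⟨m - 1, by omega⟩ := hc
        have h2 : (s.toLeftᶜ.card : ℕ) • y ⟨m - 1, by omega⟩ ≤ ∑ i ∈ s.toLeftᶜ, y i := by
          apply Finset.card_nsmul_le_sum
          intro i _
          exact hya (by simp [Fin.le_def]; omega)
        have hcc : s.toLeftᶜ.card = s.toRight.card := by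
          rw [Finset.card_compl, Fintype.card_fin]; omega
        rw [hcc] at h2
        have h3 : ∑ i ∈ s.toLeft, y i + ∑ i ∈ s.toLeftᶜ, y i = 1 := by
          rw [Finset.sum_add_sum_compl, hy.2]
        linarith
      have hlb : (1 : ℝ) ≤ eSum (dsum x x') m := by
        have hcl : ((Finset.univ : Finset (Fin m)).disjSum (∅ : Finset (Fin n))).card = m := by
          simp
        have hle := le_eSum (dsum x x') hcl
        rw [Finset.sum_disjSum, Finset.sum_empty] at hle
        have : ∑ i, dsum x x' (Sum.inl i) = (1 : ℝ) := by
          rw [show (fun i => dsum x x' (Sum.inl i)) = x from rfl, hsx]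
        rw [this] at hle
        linarith
      have := hI.1 m hm (by rw [hcard]; omega)
      linarith
  · rintro ⟨hA, hB⟩
    refine ⟨?_, hsumXY⟩
    intro l hl1 hl2
    rw [hcard] at hl2
    obtain ⟨s, hsc, hse⟩ := eSum_mem (dsum x x') (l := l) (by rw [hcard]; omega)
    rw [hse, sum_dsum_decomp]
    obtain ⟨a, hadef⟩ : ∃ k, s.toLeft.card = k := ⟨_, rfl⟩
    obtain ⟨b, hbdef⟩ : ∃ k, s.toRight.card = k := ⟨_, rfl⟩
    have hab : a + b = l := by
      rw [← hadef, ← hbdef, Finset.card_toLeft_add_card_toRight, hsc]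
    have ham : a ≤ m := by
      have := Finset.card_le_univ s.toLeft
      rw [Fintype.card_fin, hadef] at this
      exact this
    have hbn : b ≤ n := by
      have := Finset.card_le_univ s.toRight
      rw [Fintype.card_fin, hbdef] at this
      exact this
    have hxa : ∑ i ∈ s.toLeft, x i ≤ eSum x a := le_eSum x hadef
    have hxb : ∑ i ∈ s.toRight, x' i ≤ eSum x' b := le_eSum x' hbdef
    by_cases hmid : (1 ≤ a ∧ a < m)
    · have h1 : eSum x a < eSum y a := h.1 a hmid.1 (by rw [Fintype.card_fin]; exact hmid.2)
      have h2 : eSum x' b ≤ eSum y' b := interiorS_eSum_le h' (by rw [Fintype.card_fin]; exact hbn)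
      have h3 : eSum y a + eSum y' b ≤ eSum (dsum y y') l := by
        rw [← hab]; exact eSum_dsum_ge y y' ham hbn
      linarith
    · by_cases hmid' : (1 ≤ b ∧ b < n)
      · have h1 : eSum x' b < eSum y' b := h'.1 b hmid'.1 (by rw [Fintype.card_fin]; exact hmid'.2)
        have h2 : eSum x a ≤ eSum y a := interiorS_eSum_le h (by rw [Fintype.card_fin]; exact ham)
        have h3 : eSum y a + eSum y' b ≤ eSum (dsum y y') l := by
          rw [← hab]; exact eSum_dsum_ge y y' ham hbn
        linarith
      · -- a ∈ {0, m}, b ∈ {0, n}; with 1 ≤ l < m + n: (a,b) = (m,0) or (0,n)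
        have hcases : (a = m ∧ b = 0) ∨ (a = 0 ∧ b = n) := by omega
        rcases hcases with ⟨haa, hbb⟩ | ⟨haa, hbb⟩
        · have htl : s.toLeft = Finset.univ := by
            apply (Finset.card_eq_iff_eq_univ _).mp
            rw [Fintype.card_fin, hadef, haa]
          have htr : s.toRight = ∅ := Finset.card_eq_zero.mp (by rw [hbdef, hbb])
          rw [htl, htr, Finset.sum_empty, hsx, add_zero]
          have : l = m := by omega
          rw [this]
          exact key_m hB
        · have htr : s.toRight = Finset.univ := by
            apply (Finset.card_eq_iff_eq_univ _).mp
            rw [Fintype.card_fin, hbdef, hbb]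
          have htl : s.toLeft = ∅ := Finset.card_eq_zero.mp (by rw [hadef, haa])
          rw [htl, htr, Finset.sum_empty, hsx', zero_add]
          have : l = n := by omega
          rw [this]
          exact key_n hA
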